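/- The atoms in I^1 satisfy ⟨u_1⟩_0^α = ∂^αu_1, ⟨u_1⟩_1^α = u_1, ⟨u_1⟩_q^α = 0 for q > 1, ⟨∂^βu_1⟩_0^α = ∂^βu_1, and ⟨∂^βu_1⟩_q^α = 0 for q > 0; and for a standard basis element σ_1⊗⋯⊗σ_n of I^n the atom satisfies the tensor formula ⟨σ_1⊗⋯⊗σ_n⟩_q^α = Σ_{i(1)+⋯+i(n)=q} ⟨σ_1⟩_{i(1)}^α ⊗ ⟨σ_2⟩_{i(2)}^{(−1)^{i(1)}α} ⊗ ⋯ ⊗ ⟨σ_n⟩_{i(n)}^{(−1)^{i(1)+⋯+i(n−1)}α}. -/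

import Mathlib

namespace CubicalNerve

/-- Signs: `true` is `+`, `false` is `−`, as an integer `±1`. -/
def sgn (α : Bool) : ℤ := if α then 1 else -1

/-- Sign twisting: `twist α m` is the sign `(−1)^m α`. -/
def twist (α : Bool) (m : ℕ) : Bool := if Even m then α else !α

/-- A standard basis element of the chain complex `Iⁿ`: the factor at position `i` is
`u₁` when the value is `none`, and `∂^α u₁` when the value is `some α`. -/
abbrev Cell (n : ℕ) := Fin n → Option Bool

/-- The dimension of a standard basis element: the number of `u₁` factors. -/
def Cell.dim {n : ℕ} (σ : Cell n) : ℕ := (Finset.univ.filter fun i => σ i = none).card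

/-- The number of `u₁` factors strictly before position `i`. -/
def Cell.below {n : ℕ} (σ : Cell n) (i : Fin n) : ℕ :=
  (Finset.univ.filter fun j => j < i ∧ σ j = none).card

/-- The number of `∂^± u₁` factors at positions `≤ j`. -/
def Cell.sLe {n : ℕ} (σ : Cell n) (j : Fin n) : ℕ :=
  (Finset.univ.filter fun i => i ≤ j ∧ σ i ≠ none).card

/-- The chain groups of `Iⁿ` (all degrees taken together): the free abelian group
on the standard basis elements. -/
abbrev Chain (n : ℕ) := Cell n →₀ ℤ

/-- The boundary of a standard basis element (tensor-product boundary formula). -/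
noncomputable def bdCell {n : ℕ} (σ : Cell n) : Chain n :=
  ∑ i ∈ Finset.univ.filter (fun i => σ i = none),
    ((-1 : ℤ) ^ σ.below i) •
      (Finsupp.single (Function.update σ i (some true)) 1 -
        Finsupp.single (Function.update σ i (some false)) 1)

/-- The boundary operator of `Iⁿ`. -/
noncomputable def bd {n : ℕ} (c : Chain n) : Chain n := c.sum fun σ z => z • bdCell σ

/-- The positive part of a chain. -/
noncomputable def posPart {n : ℕ} (c : Chain n) : Chain n :=
  Finsupp.mapRange (fun z => max z 0) (by simp) c

/-- The negative part of a chain. -/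
noncomputable def negPart {n : ℕ} (c : Chain n) : Chain n :=
  Finsupp.mapRange (fun z => max (-z) 0) (by simp) c

/-- `∂^α`: the positive (resp. negative) part of the boundary. -/
noncomputable def bdp {n : ℕ} (α : Bool) (c : Chain n) : Chain n :=
  if α then posPart (bd c) else negPart (bd c)

/-- The atom `⟨σ⟩`: `atom σ α q` is the chain `⟨σ⟩_q^α = (∂^α)^{p−q} σ` for `q ≤ p = dim σ`,
and `0` for `q > p`. -/
noncomputable def atom {n : ℕ} (σ : Cell n) (α : Bool) (q : ℕ) : Chain n :=
  if q ≤ σ.dim then (bdp α)^[σ.dim - q] (Finsupp.single σ 1) else 0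

/-- The augmentation (extended by zero on positive-degree chains). -/
noncomputable def aug {n : ℕ} (c : Chain n) : ℤ := c.sum fun σ z => if σ.dim = 0 then z else 0

/-- The top basis element `u_n = u₁ ⊗ ⋯ ⊗ u₁` of `Iⁿ`. -/
def un (n : ℕ) : Cell n := fun _ => none

/-- The basis element `u_{k-1} ⊗ ∂^γ u₁ ⊗ u_{n-k}` (here `k : Fin n` is `k−1` in the
1-indexed notation of the paper). -/
def kcell {n : ℕ} (k : Fin n) (γ : Bool) : Cell n := Function.update (un n) k (some γ)

/-- Membership in `ν Iⁿ` for a double sequence `x`, where `x i α` is `x_i^α`: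
each `x_i^α` is an `i`-chain which is a nonnegative sum of standard basis elements,
`ε x_0^- = ε x_0^+ = 1`, and `x_i^+ − x_i^− = ∂ x_{i+1}^- = ∂ x_{i+1}^+`. -/
def IsNu {n : ℕ} (x : ℕ → Bool → Chain n) : Prop :=
  (∀ i α, ∀ σ ∈ (x i α).support, Cell.dim σ = i) ∧
  (∀ i α, 0 ≤ x i α) ∧
  (∀ α, aug (x 0 α) = 1) ∧
  (∀ i α, x i true - x i false = bd (x (i + 1) α))

/-- The double sequence of an atom. -/
noncomputable def atomSeq {n : ℕ} (σ : Cell n) : ℕ → Bool → Chain n := fun i α => atom σ α i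

/-- The identity operation `d_p^α` on double sequences. -/
noncomputable def dOp {n : ℕ} (p : ℕ) (α : Bool) (x : ℕ → Bool → Chain n) : ℕ → Bool → Chain n :=
  fun i β => if i < p then x i β else if i = p then x p α else 0

/-- The composition `x #_p y = x − d_p⁺ x + y`, formed termwise. -/
noncomputable def comp {n : ℕ} (p : ℕ) (x y : ℕ → Bool → Chain n) : ℕ → Bool → Chain n :=
  fun i β => x i β - dOp p true x i β + y i β

/-- Insertion of a new tensor factor at (0-indexed) position `i` (clamped into range). -/
def insertCell {m : ℕ} (i : ℕ) (v : Option Bool) (σ : Cell m) : Cell (m + 1) :=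
  Fin.insertNth ⟨min i m, Nat.lt_succ_of_le (min_le_right i m)⟩ v σ

/-- The face chain map `∂̌_i^α : Iᵐ → Iᵐ⁺¹` (with `i` 1-indexed, `1 ≤ i ≤ m+1`),
given on standard basis elements by `x ⊗ y ↦ x ⊗ ∂^α u₁ ⊗ y`. -/
noncomputable def faceL (m : ℕ) (i : ℕ) (α : Bool) : Chain m →ₗ[ℤ] Chain (m + 1) :=
  Finsupp.lmapDomain ℤ ℤ (insertCell (i - 1) (some α))

/-- `IsFaceComposite F` means that `F` is a composite of face chain maps `∂̌_i^α`. -/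
inductive IsFaceComposite : ∀ {m n : ℕ}, (Chain m →ₗ[ℤ] Chain n) → Prop
  | id (m : ℕ) : IsFaceComposite (LinearMap.id : Chain m →ₗ[ℤ] Chain m)
  | step {m d : ℕ} {F : Chain m →ₗ[ℤ] Chain d} (i : ℕ) (α : Bool)
      (h1 : 1 ≤ i) (h2 : i ≤ d + 1) :
      IsFaceComposite F → IsFaceComposite ((faceL d i α).comp F)

/-- `stdC m p ι a` is the composite `∂̌_{ι 0}^{a 0} ∘ ⋯ ∘ ∂̌_{ι (p-1)}^{a (p-1)} : Iᵐ → Iᵐ⁺ᵖ`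
(so `∂̌_{ι (p-1)}^{a (p-1)}` is applied first). -/
noncomputable def stdC (m : ℕ) :
    (p : ℕ) → (Fin p → ℕ) → (Fin p → Bool) → (Chain m →ₗ[ℤ] Chain (m + p))
  | 0, _, _ => LinearMap.id
  | p + 1, ι, a =>
      (faceL (m + p) (ι 0) (a 0)).comp (stdC m p (fun r => ι r.succ) (fun r => a r.succ))

/-- Transport of chains along an equality of dimensions. -/
noncomputable def chainCongr {a b : ℕ} (h : a = b) : Chain a ≃ₗ[ℤ] Chain b :=
  Finsupp.domLCongr (Equiv.arrowCongr (finCongr h) (Equiv.refl (Option Bool)))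

/-- The basis element of `I¹` with value `v`. -/
def cellOf (v : Option Bool) : Cell 1 := fun _ => v

/-- The `n`-fold tensor product of chains of `I¹`, as a chain of `Iⁿ`. -/
noncomputable def tens {n : ℕ} (c : Fin n → Chain 1) : Chain n :=
  Finsupp.equivFunOnFinite.symm fun σ => ∏ j, (c j) (cellOf (σ j))

/-- `τ` has an "extreme" standard decomposition of constant sign `ε`: for its `r`-th
factor `∂_{i}^{α}` (`r`, `i` 1-indexed), `(−1)^{i−r} α = ε`. -/
def ExtremeSign {n : ℕ} (τ : Cell n) (ε : ℤ) : Prop :=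
  ∀ (j : Fin n) (α : Bool), τ j = some α →
    (-1 : ℤ) ^ ((j : ℕ) + 1 + τ.sLe j) * sgn α = ε

/-- The basis element `τ` corresponds to a precubical operation complementary to
`∂_{k+1}^γ` (with `k : Fin n`, i.e. `k+1` in the paper's 1-indexing): its standard
decomposition has no factor at position `k`, and inserting `∂_{k+1}^{−γ}` produces
a standard decomposition of constant sign. -/
def CellCompl {n : ℕ} (k : Fin n) (γ : Bool) (τ : Cell n) : Prop :=
  τ k = none ∧ ∃ ε : ℤ, ExtremeSign (Function.update τ k (some (!γ))) ε

/-- The chain homotopy `D` associated to the face `∂_{k+1}^γ` (0-indexed `k : Fin n`). -/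
noncomputable def Dfun {n : ℕ} (k : Fin n) (γ : Bool) (c : Chain n) : Chain n :=
  c.sum fun τ z =>
    if τ k = some (!γ) then
      (z * (-((-1 : ℤ) ^ Cell.below τ k * sgn γ))) •
        Finsupp.single (Function.update τ k (none : Option Bool)) 1
    else 0

/-- The double sequence `A_q^β` of Proposition 6.4. -/
noncomputable def Aseq {n : ℕ} (k : Fin n) (γ : Bool) (q : ℕ) (β : Bool) :
    ℕ → Bool → Chain n :=
  fun i α =>
    if i + 1 < q then atom (un n) α i
    else if i + 1 = q then
      (if α = β then atom (un n) β i
       else atom (un n) β i - bd (Dfun k γ (atom (un n) β i)))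
    else if i = q then sgn β • Dfun k γ (atom (un n) β (q - 1))
    else 0

/-- The elements `A_q` of Proposition 6.5, defined inductively from the `A_q^β` by
`A_0 = ⟨σ⟩` and `A_q = A_q^− #_{q−1} A_{q−1} #_{q−1} A_q^+`. -/
noncomputable def Aq {n : ℕ} (k : Fin n) (γ : Bool) : ℕ → (ℕ → Bool → Chain n)
  | 0 => atomSeq (kcell k γ)
  | q + 1 => comp q (comp q (Aseq k γ (q + 1) false) (Aq k γ q)) (Aseq k γ (q + 1) true)



open Finset

lemma twist_not (α : Bool) (m : ℕ) : twist (!α) m = !(twist α m) := by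
  unfold twist; split <;> simp

lemma twist_succ (α : Bool) (m : ℕ) : twist α (m+1) = !(twist α m) := by
  unfold twist
  rcases Nat.even_or_odd m with h | h
  · simp [h, Nat.even_add_one, Nat.not_even_iff_odd, Nat.odd_iff.mp (Even.add_one h)]
  · simp [Nat.not_even_iff_odd.mpr h, Nat.even_add_one, Nat.not_even_iff_odd.mpr h]

lemma sgn_twist (α : Bool) (m : ℕ) : sgn (twist α m) = (-1)^m * sgn α := by
  unfold twist sgn
  rcases Nat.even_or_odd m with h | h
  · simp [h, h.neg_one_pow]
  · simp [Nat.not_even_iff_odd.mpr h, h.neg_one_pow]; cases α <;> simp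

lemma sgn_not (α : Bool) : sgn (!α) = -sgn α := by cases α <;> simp [sgn]

lemma cellOf_inj {v w : Option Bool} (h : cellOf v = cellOf w) : v = w := congrFun h 0

lemma cellOf_eta (ρ : Cell 1) : ρ = cellOf (ρ 0) := by
  funext j; rw [Fin.eq_zero j]; rfl

lemma dim_cellOf_none : (cellOf none).dim = 1 := rfl

lemma dim_cellOf_some (γ : Bool) : (cellOf (some γ)).dim = 0 := rfl

lemma update_cellOf (v : Option Bool) (i : Fin 1) (w : Option Bool) :
    Function.update (cellOf v) i w = cellOf w := by
  funext j; rw [Fin.eq_zero j, Fin.eq_zero i]; simp; rfl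

lemma bd_single {n : ℕ} (σ : Cell n) : bd (Finsupp.single σ 1) = bdCell σ := by
  unfold bd; rw [Finsupp.sum_single_index] <;> simp

lemma bdCell_cellOf_none : bdCell (cellOf none) =
    Finsupp.single (cellOf (some true)) 1 - Finsupp.single (cellOf (some false)) 1 := by
  unfold bdCell
  have h1 : (Finset.univ.filter (fun i : Fin 1 => cellOf none i = none)) = {0} := by decide
  rw [h1, Finset.sum_singleton, update_cellOf, update_cellOf]
  have : (cellOf none).below 0 = 0 := by decide
  rw [this]; simp

lemma posPart_single_sub {n : ℕ} {a b : Cell n} (h : a ≠ b) :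
    posPart (Finsupp.single a 1 - Finsupp.single b 1) = Finsupp.single a 1 := by
  ext x
  simp only [posPart, Finsupp.mapRange_apply, Finsupp.sub_apply, Finsupp.single_apply]
  rcases eq_or_ne a x with rfl | ha
  · simp [Ne.symm h]
  · rcases eq_or_ne b x with rfl | hb
    · simp [ha]
    · simp [ha, hb]

lemma negPart_single_sub {n : ℕ} {a b : Cell n} (h : a ≠ b) :
    negPart (Finsupp.single a 1 - Finsupp.single b 1) = Finsupp.single b 1 := by
  ext x
  simp only [negPart, Finsupp.mapRange_apply, Finsupp.sub_apply, Finsupp.single_apply]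
  rcases eq_or_ne a x with rfl | ha
  · simp [Ne.symm h]
  · rcases eq_or_ne b x with rfl | hb
    · simp [ha]
    · simp [ha, hb]

lemma cellOf_tf_ne : cellOf (some true) ≠ cellOf (some false) := by decide

lemma atom_none_zero (β : Bool) : atom (cellOf none) β 0 = Finsupp.single (cellOf (some β)) 1 := by
  unfold atom
  rw [dim_cellOf_none]
  simp only [Nat.zero_le, if_pos, Nat.sub_zero, Function.iterate_one]
  unfold bdp
  rw [bd_single, bdCell_cellOf_none]
  cases β
  · rw [if_neg (by simp), negPart_single_sub cellOf_tf_ne]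
  · rw [if_pos rfl, posPart_single_sub cellOf_tf_ne]

lemma atom_none_one (β : Bool) : atom (cellOf none) β 1 = Finsupp.single (cellOf none) 1 := by
  unfold atom; rw [dim_cellOf_none]; simp

lemma atom_none_big (β : Bool) (i : ℕ) (h : 1 < i) : atom (cellOf none) β i = 0 := by
  unfold atom; rw [dim_cellOf_none, if_neg (by omega)]

lemma atom_some (γ β : Bool) : atom (cellOf (some γ)) β 0 = Finsupp.single (cellOf (some γ)) 1 := by
  unfold atom; rw [dim_cellOf_some]; simp

lemma atom_some_big (γ β : Bool) (i : ℕ) (h : 0 < i) : atom (cellOf (some γ)) β i = 0 := by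
  unfold atom; rw [dim_cellOf_some, if_neg (by omega)]

lemma atomOne_apply (w v : Option Bool) (β : Bool) (i : ℕ) :
    atom (cellOf w) β i (cellOf v) =
      if i = 0 ∧ v = some (w.getD β) then 1
      else if w = none ∧ i = 1 ∧ v = none then 1 else 0 := by
  match w, i with
  | none, 0 =>
    rw [atom_none_zero]
    simp only [Finsupp.single_apply]
    by_cases h : v = some β
    · subst h; simp
    · rw [if_neg (fun hc => h (cellOf_inj hc.symm))]; simp [h]
  | none, 1 =>
    rw [atom_none_one]
    simp only [Finsupp.single_apply]
    by_cases h : v = none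
    · subst h; simp
    · rw [if_neg (fun hc => h (cellOf_inj hc.symm))]; simp [h]
  | none, (i+2) => rw [atom_none_big β _ (by omega)]; simp
  | some γ, 0 =>
    rw [atom_some]
    simp only [Finsupp.single_apply]
    by_cases h : v = some γ
    · subst h; simp
    · rw [if_neg (fun hc => h (cellOf_inj hc.symm))]; simp [h]
  | some γ, (i+1) => rw [atom_some_big γ β _ (by omega)]; simp


lemma ifarith (P Q R : Prop) [Decidable P] [Decidable Q] [Decidable R] :
    (if Q then (if P then (1:ℤ) else -1) else 0)
      + (if P then 0 else ((if Q then 1 else 0) - (if R then 1 else 0)))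
    = (if P ∧ Q then 1 else 0) - (if ¬P ∧ R then 1 else 0) := by
  by_cases hP : P <;> by_cases hQ : Q <;> by_cases hR : R <;> simp [hP, hQ, hR]

lemma stepSum {n : ℕ} (J : Finset (Fin n)) (γ : Fin n → Prop) [DecidablePred γ] :
    ∑ i ∈ J, (if (∀ j ∈ J, j < i → γ j) ∧ (∀ j ∈ J, i < j → ¬ γ j) then
        (if γ i then (1:ℤ) else -1) else 0)
    = (if ∀ j ∈ J, γ j then 1 else 0) - (if ∀ j ∈ J, ¬ γ j then 1 else 0) := by
  induction J using Finset.induction_on_max with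
  | empty => simp
  | insert a s hmax ih =>
    have ha : a ∉ s := fun h => lt_irrefl a (hmax a h)
    rw [Finset.sum_insert ha]
    have hterm_a : (if (∀ j ∈ insert a s, j < a → γ j) ∧ (∀ j ∈ insert a s, a < j → ¬ γ j) then
        (if γ a then (1:ℤ) else -1) else 0)
        = if ∀ j ∈ s, γ j then (if γ a then (1:ℤ) else -1) else 0 := by
      congr 1
      simp only [Finset.forall_mem_insert, eq_iff_iff]
      constructor
      · rintro ⟨⟨-, h1⟩, -⟩ j hj; exact h1 j hj (hmax j hj)
      · intro h
        exact ⟨⟨fun h' => absurd h' (lt_irrefl a), fun j hj _ => h j hj⟩,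
          fun h' => absurd h' (lt_irrefl a),
          fun j hj hlt => absurd hlt (not_lt.2 (le_of_lt (hmax j hj)))⟩
    have hsum : ∑ i ∈ s, (if (∀ j ∈ insert a s, j < i → γ j) ∧ (∀ j ∈ insert a s, i < j → ¬ γ j)
          then (if γ i then (1:ℤ) else -1) else 0)
        = if γ a then 0 else ∑ i ∈ s, (if (∀ j ∈ s, j < i → γ j) ∧ (∀ j ∈ s, i < j → ¬ γ j) then
            (if γ i then (1:ℤ) else -1) else 0) := by
      by_cases hγa : γ a
      · rw [if_pos hγa]
        refine Finset.sum_eq_zero fun i hi => ?_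
        rw [if_neg]
        rintro ⟨-, h2⟩
        exact h2 a (Finset.mem_insert_self a s) (hmax i hi) hγa
      · rw [if_neg hγa]
        refine Finset.sum_congr rfl fun i hi => ?_
        congr 1
        simp only [Finset.forall_mem_insert, eq_iff_iff]
        constructor
        · rintro ⟨⟨-, h1⟩, ⟨-, h2⟩⟩; exact ⟨h1, h2⟩
        · rintro ⟨h1, h2⟩
          exact ⟨⟨fun hlt => absurd hlt (not_lt.2 (le_of_lt (hmax i hi))), h1⟩,
                 ⟨fun _ => hγa, h2⟩⟩
    rw [hterm_a, hsum, ih]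
    have e1 : (if ∀ j ∈ insert a s, γ j then (1:ℤ) else 0)
        = if γ a ∧ ∀ j ∈ s, γ j then 1 else 0 :=
      if_congr (Finset.forall_mem_insert a s γ) rfl rfl
    have e2 : (if ∀ j ∈ insert a s, ¬ γ j then (1:ℤ) else 0)
        = if ¬ γ a ∧ ∀ j ∈ s, ¬ γ j then 1 else 0 :=
      if_congr (Finset.forall_mem_insert a s _) rfl rfl
    rw [e1, e2]
    exact ifarith (γ a) _ _


lemma dim_update_none {n : ℕ} (ρ : Cell n) (i : Fin n) (h : ρ i ≠ none) :
    Cell.dim (Function.update ρ i none) = ρ.dim + 1 := by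
  unfold Cell.dim
  rw [Finset.card_filter, Finset.card_filter]
  have key : ∀ j : Fin n, (if Function.update ρ i none j = none then (1:ℕ) else 0)
      = (if ρ j = none then 1 else 0) + (if j = i then 1 else 0) := by
    intro j
    rcases eq_or_ne j i with rfl | hj
    · simp [Function.update_self, h]
    · simp [Function.update_of_ne hj, hj]
  simp only [key, Finset.sum_add_distrib]
  simp

lemma below_update_le {n : ℕ} (ρ : Cell n) (i j : Fin n) (v : Option Bool) (h : j ≤ i) :
    Cell.below (Function.update ρ i v) j = ρ.below j := by
  unfold Cell.below
  congr 1
  apply Finset.filter_congr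
  intro t _
  rcases eq_or_ne t i with rfl | ht
  · constructor <;> (rintro ⟨h1, h2⟩; exact absurd (lt_of_lt_of_le h1 h) (lt_irrefl t))
  · rw [Function.update_of_ne ht]

lemma below_update_gt {n : ℕ} (ρ : Cell n) (i j : Fin n) (h : ρ i ≠ none) (hij : i < j) :
    Cell.below (Function.update ρ i none) j = ρ.below j + 1 := by
  unfold Cell.below
  rw [Finset.card_filter, Finset.card_filter]
  have key : ∀ t : Fin n, (if t < j ∧ Function.update ρ i none t = none then (1:ℕ) else 0)
      = (if t < j ∧ ρ t = none then 1 else 0) + (if t = i then 1 else 0) := by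
    intro t
    rcases eq_or_ne t i with rfl | ht
    · simp [Function.update_self, hij, h]
    · simp [Function.update_of_ne ht, ht]
  simp only [key, Finset.sum_add_distrib]
  simp

lemma dim_le_of_compat {n : ℕ} {σ ρ : Cell n} (h : ∀ j, σ j ≠ none → ρ j = σ j) :
    ρ.dim ≤ σ.dim := by
  apply Finset.card_le_card
  intro j hj
  simp only [Finset.mem_filter, Finset.mem_univ, true_and] at *
  by_contra hσ
  exact hσ ((h j hσ).symm.trans hj)

lemma below_eq_sum {n : ℕ} (ρ : Cell n) (j : Fin n) :
    ρ.below j = ∑ t ∈ Finset.univ.filter (fun t => t < j), (if ρ t = none then 1 else 0) := by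
  unfold Cell.below
  rw [Finset.card_filter, Finset.sum_filter]
  apply Finset.sum_congr rfl
  intro t _
  by_cases h1 : t < j <;> by_cases h2 : ρ t = none <;> simp [h1, h2]

lemma dim_eq_sum {n : ℕ} (ρ : Cell n) :
    ρ.dim = ∑ j, (if ρ j = none then 1 else 0) := Finset.card_filter _ _


noncomputable def bcoef {n : ℕ} (ρ : Cell n) (i : Fin n) : ℤ :=
  match ρ i with
  | some true => (-1)^(ρ.below i)
  | some false => -(-1)^(ρ.below i)
  | none => 0

lemma update_update_self {n : ℕ} (ρ : Cell n) (i : Fin n) (v : Option Bool) (h : ρ i = v) :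
    Function.update (Function.update ρ i none) i v = ρ := by
  rw [Function.update_idem]
  funext j
  rw [Function.update_apply]
  split
  · next hj => rw [hj, h]
  · rfl

lemma bd_apply {n : ℕ} (c : Chain n) (ρ : Cell n) :
    bd c ρ = ∑ i : Fin n, bcoef ρ i * c (Function.update ρ i none) := by
  have step1 : bd c ρ = ∑ σ : Cell n, c σ * bdCell σ ρ := by
    unfold bd
    rw [Finsupp.sum_apply, Finsupp.sum,
      Finset.sum_subset (Finset.subset_univ c.support)]
    · exact Finset.sum_congr rfl fun σ _ => by rw [Finsupp.smul_apply, smul_eq_mul]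
    · intro σ _ hσ
      rw [Finsupp.notMem_support_iff.mp hσ]; simp
  have step2 : ∀ σ : Cell n, c σ * bdCell σ ρ
      = ∑ i : Fin n, (if σ i = none then
          c σ * ((-1:ℤ)^(Cell.below σ i) * ((if Function.update σ i (some true) = ρ then 1 else 0)
            - (if Function.update σ i (some false) = ρ then 1 else 0))) else 0) := by
    intro σ
    unfold bdCell
    rw [Finset.sum_apply', Finset.sum_filter, Finset.mul_sum]
    refine Finset.sum_congr rfl fun i _ => ?_
    by_cases h : σ i = none
    · rw [if_pos h, if_pos h, Finsupp.smul_apply, Finsupp.sub_apply,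
        Finsupp.single_apply, Finsupp.single_apply, smul_eq_mul]
    · rw [if_neg h, if_neg h, mul_zero]
  rw [step1]
  simp only [step2]
  rw [Finset.sum_comm]
  refine Finset.sum_congr rfl fun i _ => ?_
  rcases hri : ρ i with _ | ε
  · -- ρ i = none : all terms vanish, bcoef = 0
    have hb : bcoef ρ i = 0 := by unfold bcoef; rw [hri]
    rw [hb, zero_mul]
    refine Finset.sum_eq_zero fun σ _ => ?_
    by_cases h : σ i = none
    · rw [if_pos h]
      have e1 : (Function.update σ i (some true) = ρ) = False := by
        simp only [eq_iff_iff, iff_false]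
        intro he
        have h2 := congrFun he i
        rw [Function.update_self, hri] at h2
        cases h2
      have e2 : (Function.update σ i (some false) = ρ) = False := by
        simp only [eq_iff_iff, iff_false]
        intro he
        have h2 := congrFun he i
        rw [Function.update_self, hri] at h2
        cases h2
      simp only [e1, e2]
      simp
    · rw [if_neg h]
  · -- ρ i = some ε
    rw [Finset.sum_eq_single (Function.update ρ i none)]
    · have hτi : Function.update ρ i none i = none := Function.update_self i none ρ
      rw [if_pos hτi]
      have e3 : Cell.below (Function.update ρ i none) i = ρ.below i :=
        below_update_le ρ i i none (le_refl i)
      have e1 : ∀ b : Bool, (Function.update (Function.update ρ i none) i (some b) = ρ) = (b = ε) := by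
        intro b
        simp only [eq_iff_iff]
        constructor
        · intro he
          have h2 := congrFun he i
          rw [Function.update_idem, Function.update_self, hri] at h2
          exact (Option.some_inj.mp h2)
        · rintro rfl
          exact update_update_self ρ i (some b) hri
      simp only [e1]
      rw [e3]
      have hb : bcoef ρ i = (if ε then (1:ℤ) else -1) * (-1)^(ρ.below i) := by
        unfold bcoef; rw [hri]; cases ε <;> simp
      rw [hb]
      cases ε <;> simp <;> ring
    · intro σ _ hσ
      by_cases h : σ i = none
      · rw [if_pos h]
        have key : ∀ b : Bool, (Function.update σ i (some b) = ρ) = False := by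
          intro b
          simp only [eq_iff_iff, iff_false]
          intro he
          apply hσ
          rw [← he, Function.update_idem]
          funext j
          rw [Function.update_apply]
          split
          · next hj => rw [hj, h]
          · rfl
        simp only [key]
        simp
      · rw [if_neg h]
    · intro hmem
      exact absurd (Finset.mem_univ _) hmem


def coeffP {n : ℕ} (σ : Cell n) (α : Bool) (q : ℕ) (ρ : Cell n) : Prop :=
  ρ.dim = q ∧ (∀ j, σ j ≠ none → ρ j = σ j) ∧
    (∀ j β, σ j = none → ρ j = some β → β = twist α (ρ.below j))

instance coeffP.dec {n : ℕ} (σ : Cell n) (α : Bool) (q : ℕ) (ρ : Cell n) :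
    Decidable (coeffP σ α q ρ) := by unfold coeffP; infer_instance

def coeffF {n : ℕ} (σ : Cell n) (α : Bool) (q : ℕ) (ρ : Cell n) : ℤ :=
  if coeffP σ α q ρ then 1 else 0

noncomputable def RHSc {n : ℕ} (σ : Cell n) (α : Bool) (q : ℕ) : Chain n :=
  Finsupp.equivFunOnFinite.symm (coeffF σ α q)

lemma RHSc_apply {n : ℕ} (σ : Cell n) (α : Bool) (q : ℕ) (ρ : Cell n) :
    RHSc σ α q ρ = coeffF σ α q ρ :=
  congrFun (Finsupp.coe_equivFunOnFinite_symm _) _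

lemma some_of_ne_none {x : Option Bool} (h : x ≠ none) : ∃ b, x = some b := by
  cases x
  · exact absurd rfl h
  · exact ⟨_, rfl⟩

lemma neg_one_sq_nat (b : ℕ) : (-1:ℤ)^b * (-1)^b = 1 := by
  rw [← pow_add]
  exact Even.neg_one_pow ⟨b, rfl⟩

lemma bcoef_some {n : ℕ} (ρ : Cell n) (i : Fin n) (ε : Bool) (h : ρ i = some ε) :
    bcoef ρ i = sgn ε * (-1:ℤ)^(ρ.below i) := by
  unfold bcoef; rw [h]; cases ε <;> simp [sgn]

lemma sgn_mul_ite (ε α : Bool) (b : ℕ) :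
    sgn ε * (-1:ℤ)^b = sgn α * (if ε = twist α b then (1:ℤ) else -1) := by
  rcases Nat.even_or_odd b with h | h
  · rw [h.neg_one_pow]; cases ε <;> cases α <;> simp [twist, sgn, h]
  · rw [h.neg_one_pow]; cases ε <;> cases α <;>
      simp [twist, sgn, Nat.not_even_iff_odd.mpr h]

lemma bd_RHSc {n : ℕ} (σ : Cell n) (α : Bool) (q : ℕ) :
    bd (RHSc σ α (q+1)) = RHSc σ true q - RHSc σ false q := by
  ext ρ
  rw [Finsupp.sub_apply, bd_apply]
  simp only [RHSc_apply]
  by_cases hcompat : ∀ j, σ j ≠ none → ρ j = σ j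
  · by_cases hdim : ρ.dim = q
    · -- main case
      have hmemJ : ∀ j, j ∈ Finset.univ.filter (fun j => σ j = none ∧ ρ j ≠ none)
          ↔ (σ j = none ∧ ρ j ≠ none) := by
        intro j; simp
      set J : Finset (Fin n) := Finset.univ.filter (fun j => σ j = none ∧ ρ j ≠ none) with hJ
      have hrestr : ∑ i : Fin n, bcoef ρ i * coeffF σ α (q+1) (Function.update ρ i none)
          = ∑ i ∈ J, bcoef ρ i * coeffF σ α (q+1) (Function.update ρ i none) := by
        refine (Finset.sum_subset (Finset.subset_univ J) ?_).symm
        intro i _ hiJ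
        rcases hri : ρ i with _ | ε
        · have hb : bcoef ρ i = 0 := by unfold bcoef; rw [hri]
          rw [hb, zero_mul]
        · have hσi : σ i ≠ none := by
            intro hno
            exact hiJ ((hmemJ i).2 ⟨hno, by rw [hri]; simp⟩)
          have hz : coeffF σ α (q+1) (Function.update ρ i none) = 0 := by
            rw [coeffF, if_neg]
            rintro ⟨-, h2, -⟩
            have h3 := h2 i hσi
            rw [Function.update_self] at h3
            exact hσi h3.symm
          rw [hz, mul_zero]
      rw [hrestr]
      have hterm : ∀ i ∈ J, bcoef ρ i * coeffF σ α (q+1) (Function.update ρ i none)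
          = sgn α * (if (∀ j ∈ J, j < i → (ρ j = some (twist α (ρ.below j)))) ∧
              (∀ j ∈ J, i < j → ¬(ρ j = some (twist α (ρ.below j)))) then
              (if ρ i = some (twist α (ρ.below i)) then (1:ℤ) else -1) else 0) := by
        intro i hi
        obtain ⟨hσi, hρi⟩ := (hmemJ i).1 hi
        obtain ⟨ε, hri⟩ := some_of_ne_none hρi
        have hiff : coeffP σ α (q+1) (Function.update ρ i none) ↔
            ((∀ j ∈ J, j < i → (ρ j = some (twist α (ρ.below j)))) ∧
             (∀ j ∈ J, i < j → ¬(ρ j = some (twist α (ρ.below j))))) := by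
          unfold coeffP
          constructor
          · rintro ⟨-, -, h3⟩
            constructor
            · intro j hj hlt
              obtain ⟨hσj, hρj⟩ := (hmemJ j).1 hj
              obtain ⟨β, hrj⟩ := some_of_ne_none hρj
              have hupd : Function.update ρ i none j = some β := by
                rw [Function.update_of_ne (ne_of_lt hlt)]; exact hrj
              have h4 := h3 j β hσj hupd
              rw [below_update_le ρ i j none (le_of_lt hlt)] at h4
              rw [hrj, h4]
            · intro j hj hlt hc
              obtain ⟨hσj, hρj⟩ := (hmemJ j).1 hj
              obtain ⟨β, hrj⟩ := some_of_ne_none hρj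
              have hupd : Function.update ρ i none j = some β := by
                rw [Function.update_of_ne (ne_of_lt hlt).symm]; exact hrj
              have h4 := h3 j β hσj hupd
              rw [below_update_gt ρ i j (by rw [hri]; simp) hlt, twist_succ] at h4
              rw [hrj] at hc
              have h5 := Option.some_inj.mp hc
              rw [h5] at h4
              exact Bool.not_ne_self _ h4.symm
          · rintro ⟨hlo, hhi⟩
            refine ⟨?_, ?_, ?_⟩
            · rw [dim_update_none ρ i (by rw [hri]; simp), hdim]
            · intro j hj
              have hne : j ≠ i := fun he => hj (he ▸ hσi)
              rw [Function.update_of_ne hne]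
              exact hcompat j hj
            · intro j β hσj hupd
              rcases eq_or_ne j i with rfl | hne
              · rw [Function.update_self] at hupd
                cases hupd
              · rw [Function.update_of_ne hne] at hupd
                have hjJ : j ∈ J := (hmemJ j).2 ⟨hσj, by rw [hupd]; simp⟩
                rcases lt_trichotomy j i with hlt | heq | hgt
                · have h4 := hlo j hjJ hlt
                  rw [hupd] at h4
                  rw [below_update_le ρ i j none (le_of_lt hlt)]
                  exact Option.some_inj.mp h4
                · exact absurd heq hne
                · have h4 := hhi j hjJ hgt
                  rw [hupd] at h4
                  rw [below_update_gt ρ i j (by rw [hri]; simp) hgt, twist_succ]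
                  have : β ≠ twist α (ρ.below j) := fun he => h4 (by rw [he])
                  cases β <;> cases htw : twist α (ρ.below j) <;> simp_all
        rw [coeffF]
        by_cases hc : coeffP σ α (q+1) (Function.update ρ i none)
        · rw [if_pos hc, if_pos (hiff.1 hc), mul_one, bcoef_some ρ i ε hri]
          have hcond : (ρ i = some (twist α (ρ.below i))) ↔ (ε = twist α (ρ.below i)) := by
            rw [hri]; simp
          rw [if_congr hcond rfl rfl]
          exact sgn_mul_ite ε α (ρ.below i)
        · rw [if_neg hc, if_neg (fun h => hc (hiff.2 h)), mul_zero, mul_zero]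
      rw [Finset.sum_congr rfl hterm, ← Finset.mul_sum,
        stepSum J (fun j => ρ j = some (twist α (ρ.below j)))]
      have hA : ∀ α' : Bool, coeffF σ α' q ρ
          = (if ∀ j ∈ J, ρ j = some (twist α' (ρ.below j)) then (1:ℤ) else 0) := by
        intro α'
        rw [coeffF]
        refine if_congr ?_ rfl rfl
        unfold coeffP
        constructor
        · rintro ⟨-, -, h3⟩ j hj
          obtain ⟨hσj, hρj⟩ := (hmemJ j).1 hj
          obtain ⟨β, hrj⟩ := some_of_ne_none hρj
          rw [hrj, h3 j β hσj hrj]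
        · intro h
          refine ⟨hdim, hcompat, ?_⟩
          intro j β hσj hrj
          have hj : j ∈ J := (hmemJ j).2 ⟨hσj, by rw [hrj]; simp⟩
          have h4 := h j hj
          rw [hrj] at h4
          exact Option.some_inj.mp h4
      rw [hA true, hA false]
      have hneg : ∀ j ∈ J, ((ρ j = some (twist false (ρ.below j)))
          ↔ ¬(ρ j = some (twist true (ρ.below j)))) := by
        intro j hj
        obtain ⟨-, hρj⟩ := (hmemJ j).1 hj
        obtain ⟨β, hrj⟩ := some_of_ne_none hρj
        rw [hrj]
        have htf : twist false (ρ.below j) = !(twist true (ρ.below j)) := by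
          have := twist_not true (ρ.below j)
          simpa using this
        rw [htf]
        cases β <;> cases htw : twist true (ρ.below j) <;> simp_all
      have e2 : (if ∀ j ∈ J, ρ j = some (twist false (ρ.below j)) then (1:ℤ) else 0)
          = (if ∀ j ∈ J, ¬(ρ j = some (twist true (ρ.below j))) then (1:ℤ) else 0) := by
        refine if_congr ?_ rfl rfl
        exact forall₂_congr hneg
      rw [e2]
      cases α
      · -- α = false
        have e3 : (if ∀ j ∈ J, ρ j = some (twist false (ρ.below j)) then (1:ℤ) else 0)
            = (if ∀ j ∈ J, ¬(ρ j = some (twist true (ρ.below j))) then (1:ℤ) else 0) := by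
          refine if_congr ?_ rfl rfl
          exact forall₂_congr hneg
        have e4 : (if ∀ j ∈ J, ¬(ρ j = some (twist false (ρ.below j))) then (1:ℤ) else 0)
            = (if ∀ j ∈ J, ρ j = some (twist true (ρ.below j)) then (1:ℤ) else 0) := by
          refine if_congr ?_ rfl rfl
          refine forall₂_congr ?_
          intro j hj
          rw [hneg j hj]
          exact not_not
        rw [e3, e4]
        show (-1:ℤ) * _ = _
        ring
      · -- α = true
        show (1:ℤ) * _ = _
        ring
    · -- dim ρ ≠ q : both sides vanish
      have hz : ∀ α' : Bool, coeffF σ α' q ρ = 0 := by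
        intro α'
        rw [coeffF, if_neg]
        rintro ⟨h1, -, -⟩
        exact hdim h1
      rw [hz true, hz false, sub_zero]
      refine Finset.sum_eq_zero fun i _ => ?_
      rcases hri : ρ i with _ | ε
      · have hb : bcoef ρ i = 0 := by unfold bcoef; rw [hri]
        rw [hb, zero_mul]
      · have hz2 : coeffF σ α (q+1) (Function.update ρ i none) = 0 := by
          rw [coeffF, if_neg]
          rintro ⟨h1, -, -⟩
          rw [dim_update_none ρ i (by rw [hri]; simp)] at h1
          exact hdim (Nat.succ_injective h1)
        rw [hz2, mul_zero]
  · -- compat fails : both sides vanish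
    push_neg at hcompat
    obtain ⟨j0, hj0, hne0⟩ := hcompat
    have hz : ∀ α' : Bool, coeffF σ α' q ρ = 0 := by
      intro α'
      rw [coeffF, if_neg]
      rintro ⟨-, h2, -⟩
      exact hne0 (h2 j0 hj0)
    rw [hz true, hz false, sub_zero]
    refine Finset.sum_eq_zero fun i _ => ?_
    rcases hri : ρ i with _ | ε
    · have hb : bcoef ρ i = 0 := by unfold bcoef; rw [hri]
      rw [hb, zero_mul]
    · have hz2 : coeffF σ α (q+1) (Function.update ρ i none) = 0 := by
        rw [coeffF, if_neg]
        rintro ⟨-, h2, -⟩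
        rcases eq_or_ne j0 i with rfl | hne
        · have h3 := h2 j0 hj0
          rw [Function.update_self] at h3
          exact hj0 h3.symm
        · have h3 := h2 j0 hj0
          rw [Function.update_of_ne hne] at h3
          exact hne0 h3
      rw [hz2, mul_zero]


lemma coeffP_not_both {n : ℕ} (σ : Cell n) (q : ℕ) (hq : q < σ.dim) (ρ : Cell n) :
    ¬(coeffP σ true q ρ ∧ coeffP σ false q ρ) := by
  rintro ⟨⟨hd1, hc1, ht1⟩, ⟨-, -, ht2⟩⟩
  by_cases hJ : ∃ j, σ j = none ∧ ρ j ≠ none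
  · obtain ⟨j, hσj, hρj⟩ := hJ
    obtain ⟨β, hrj⟩ := some_of_ne_none hρj
    have e1 := ht1 j β hσj hrj
    have e2 := ht2 j β hσj hrj
    rw [e1] at e2
    have : twist false (ρ.below j) = !(twist true (ρ.below j)) := by
      simpa using twist_not true (ρ.below j)
    rw [this] at e2
    exact Bool.not_ne_self _ e2.symm
  · push_neg at hJ
    have : ρ = σ := by
      funext j
      by_cases hσj : σ j = none
      · rw [hσj, hJ j hσj]
      · rw [hc1 j hσj]
    rw [this] at hd1
    omega

lemma coeffF_cases {n : ℕ} (σ : Cell n) (α : Bool) (q : ℕ) (ρ : Cell n) :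
    coeffF σ α q ρ = 0 ∨ coeffF σ α q ρ = 1 := by
  rw [coeffF]; split
  · right; rfl
  · left; rfl

lemma bdp_RHSc {n : ℕ} (σ : Cell n) (α : Bool) (q : ℕ) (hq : q < σ.dim) :
    bdp α (RHSc σ α (q+1)) = RHSc σ α q := by
  have hzero : ∀ ρ : Cell n, coeffF σ true q ρ = 0 ∨ coeffF σ false q ρ = 0 := by
    intro ρ
    by_cases h : coeffP σ true q ρ
    · right
      rw [coeffF, if_neg]
      intro h2
      exact coeffP_not_both σ q hq ρ ⟨h, h2⟩
    · left
      rw [coeffF, if_neg h]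
  unfold bdp
  rw [bd_RHSc]
  cases α
  · rw [if_neg (by simp)]
    ext ρ
    rw [RHSc_apply]
    simp only [negPart, Finsupp.mapRange_apply, Finsupp.sub_apply, RHSc_apply]
    rcases coeffF_cases σ true q ρ with h1 | h1 <;>
      rcases coeffF_cases σ false q ρ with h2 | h2 <;>
      rcases hzero ρ with h3 | h3 <;> first | omega | (rw [h1, h2]; simp)
  · rw [if_pos rfl]
    ext ρ
    rw [RHSc_apply]
    simp only [posPart, Finsupp.mapRange_apply, Finsupp.sub_apply, RHSc_apply]
    rcases coeffF_cases σ true q ρ with h1 | h1 <;>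
      rcases coeffF_cases σ false q ρ with h2 | h2 <;>
      rcases hzero ρ with h3 | h3 <;> first | omega | (rw [h1, h2]; simp)

lemma RHSc_dim {n : ℕ} (σ : Cell n) (α : Bool) : RHSc σ α σ.dim = Finsupp.single σ 1 := by
  ext ρ
  rw [RHSc_apply, Finsupp.single_apply, coeffF]
  rcases eq_or_ne σ ρ with rfl | hne
  · rw [if_pos rfl, if_pos]
    refine ⟨rfl, fun j _ => rfl, fun j β hn hs => ?_⟩
    rw [hn] at hs
    cases hs
  · rw [if_neg hne, if_neg]
    rintro ⟨hd, hc, -⟩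
    apply hne
    have hsub : Finset.univ.filter (fun j => ρ j = none)
        ⊆ Finset.univ.filter (fun j => σ j = none) := by
      intro j hj
      simp only [Finset.mem_filter, Finset.mem_univ, true_and] at *
      by_contra hσj
      exact hσj ((hc j hσj).symm.trans hj)
    have hcards : (Finset.univ.filter (fun j => σ j = none)).card
        ≤ (Finset.univ.filter (fun j => ρ j = none)).card := le_of_eq hd.symm
    have hsets := Finset.eq_of_subset_of_card_le hsub hcards
    funext j
    by_cases hσj : σ j = none
    · have : j ∈ Finset.univ.filter (fun j => ρ j = none) := by
        rw [hsets]
        simp [hσj]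
      simp only [Finset.mem_filter, Finset.mem_univ, true_and] at this
      rw [hσj, this]
    · exact (hc j hσj).symm

lemma atom_eq_RHSc {n : ℕ} (σ : Cell n) (α : Bool) (q : ℕ) : atom σ α q = RHSc σ α q := by
  by_cases hq : q ≤ σ.dim
  · obtain ⟨k, hk⟩ : ∃ k, q + k = σ.dim := ⟨σ.dim - q, by omega⟩
    unfold atom
    rw [if_pos hq]
    have hsub : σ.dim - q = k := by omega
    rw [hsub]
    clear hq hsub
    induction k generalizing q with
    | zero =>
      have hqd : q = σ.dim := by omega
      subst hqd
      rw [Function.iterate_zero_apply, RHSc_dim]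
    | succ k ih =>
      rw [Function.iterate_succ_apply', ih (q+1) (by omega), bdp_RHSc σ α q (by omega)]
  · unfold atom
    rw [if_neg hq]
    symm
    ext ρ
    rw [RHSc_apply, coeffF, if_neg]
    · rfl
    rintro ⟨h1, h2, -⟩
    have := dim_le_of_compat h2
    omega


lemma tens_apply {n : ℕ} (c : Fin n → Chain 1) (ρ : Cell n) :
    tens c ρ = ∏ j, (c j) (cellOf (ρ j)) :=
  congrFun (Finsupp.coe_equivFunOnFinite_symm _) _

lemma sumRHS_eq {n : ℕ} (σ : Cell n) (α : Bool) (q : ℕ) :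
    ∑ ι ∈ Finset.Nat.antidiagonalTuple n q,
      tens (fun j => atom (cellOf (σ j))
        (twist α (∑ t ∈ Finset.univ.filter (fun t => t < j), ι t)) (ι j))
    = RHSc σ α q := by
  ext ρ
  rw [RHSc_apply, Finset.sum_apply']
  set ι₀ : Fin n → ℕ := fun j => if ρ j = none then 1 else 0 with hι₀
  have hkey : ∀ ι ∈ Finset.Nat.antidiagonalTuple n q,
      tens (fun j => atom (cellOf (σ j))
        (twist α (∑ t ∈ Finset.univ.filter (fun t => t < j), ι t)) (ι j)) ρ
      = if coeffP σ α q ρ ∧ ι = ι₀ then 1 else 0 := by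
    intro ι hmem
    rw [Finset.Nat.mem_antidiagonalTuple] at hmem
    rw [tens_apply]
    by_cases hok : coeffP σ α q ρ ∧ ι = ι₀
    · obtain ⟨⟨hdim, hcompat, htw⟩, rfl⟩ := hok
      rw [if_pos ⟨⟨hdim, hcompat, htw⟩, rfl⟩]
      apply Finset.prod_eq_one
      intro j _
      rw [atomOne_apply]
      have hS : (∑ t ∈ Finset.univ.filter (fun t => t < j), ι₀ t) = ρ.below j :=
        (below_eq_sum ρ j).symm
      rw [hS]
      rcases hrj : ρ j with _ | β
      · have hσj : σ j = none := by
          by_contra h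
          rw [hcompat j h] at hrj
          exact h hrj
        rw [if_neg, if_pos ⟨hσj, by simp [hι₀, hrj], rfl⟩]
        rintro ⟨-, h2⟩
        cases h2
      · have hι : ι₀ j = 0 := by simp [hι₀, hrj]
        cases hσj : σ j with
        | none =>
          rw [if_pos ⟨hι, by rw [htw j β hσj hrj]; rfl⟩]
        | some γ =>
          have hcj : ρ j = σ j := hcompat j (by rw [hσj]; simp)
          rw [if_pos ⟨hι, by rw [← hrj, hcj, hσj]; rfl⟩]
    · rw [if_neg hok]
      by_contra hne
      have hfac := fun j => (Finset.prod_ne_zero_iff.mp hne) j (Finset.mem_univ j)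
      have hC : ∀ j : Fin n,
          (ι j = 0 ∧ ρ j = some ((σ j).getD
            (twist α (∑ t ∈ Finset.univ.filter (fun t => t < j), ι t)))) ∨
          (σ j = none ∧ ι j = 1 ∧ ρ j = none) := by
        intro j
        have h := hfac j
        rw [atomOne_apply] at h
        by_cases c1 : ι j = 0 ∧ ρ j = some ((σ j).getD
            (twist α (∑ t ∈ Finset.univ.filter (fun t => t < j), ι t)))
        · exact Or.inl c1
        by_cases c2 : σ j = none ∧ ι j = 1 ∧ ρ j = none
        · exact Or.inr c2
        rw [if_neg c1, if_neg c2] at h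
        exact absurd rfl h
      have hι : ι = ι₀ := by
        funext j
        rcases hC j with ⟨h1, h2⟩ | ⟨-, h1, h2⟩
        · rw [h1, hι₀]
          simp [h2]
        · rw [h1, hι₀]
          simp [h2]
      have hS : ∀ j, (∑ t ∈ Finset.univ.filter (fun t => t < j), ι t) = ρ.below j := by
        intro j
        rw [hι]
        exact (below_eq_sum ρ j).symm
      apply hok
      refine ⟨⟨?_, ?_, ?_⟩, hι⟩
      · rw [← hmem, hι, dim_eq_sum]
      · intro j hσj
        rcases hC j with ⟨-, h2⟩ | ⟨h1, -, -⟩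
        · rcases hsj : σ j with _ | γ
          · exact absurd hsj hσj
          · rw [hsj] at h2
            rw [h2]
            rfl
        · exact absurd h1 hσj
      · intro j β hσj hrj
        rcases hC j with ⟨-, h2⟩ | ⟨-, -, h3⟩
        · rw [hσj, hS j] at h2
          rw [hrj] at h2
          exact Option.some_inj.mp h2
        · rw [h3] at hrj
          cases hrj
  rw [Finset.sum_congr rfl hkey]
  by_cases hP : coeffP σ α q ρ
  · have e1 : ∀ ι ∈ Finset.Nat.antidiagonalTuple n q,
        (if coeffP σ α q ρ ∧ ι = ι₀ then (1:ℤ) else 0) = if ι = ι₀ then 1 else 0 := by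
      intro ι _
      refine if_congr ?_ rfl rfl
      simp [hP]
    rw [Finset.sum_congr rfl e1, Finset.sum_ite_eq' (Finset.Nat.antidiagonalTuple n q) ι₀
      (fun _ => (1:ℤ))]
    have hmem0 : ι₀ ∈ Finset.Nat.antidiagonalTuple n q := by
      rw [Finset.Nat.mem_antidiagonalTuple]
      obtain ⟨hd, -, -⟩ := hP
      rw [← hd, dim_eq_sum]
    rw [if_pos hmem0, coeffF, if_pos hP]
  · have e1 : ∀ ι ∈ Finset.Nat.antidiagonalTuple n q,
        (if coeffP σ α q ρ ∧ ι = ι₀ then (1:ℤ) else 0) = 0 := by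
      intro ι _
      rw [if_neg (fun h => hP h.1)]
    rw [Finset.sum_congr rfl e1, Finset.sum_const, smul_zero, coeffF, if_neg hP]


/-- the atoms in `I¹` are given by `⟨u₁⟩_0^α = ∂^α u₁`, `⟨u₁⟩_1^α = u₁`,
`⟨u₁⟩_q^α = 0` for `q > 1`, `⟨∂^β u₁⟩_0^α = ∂^β u₁` and `⟨∂^β u₁⟩_q^α = 0` for `q > 0`;
and the atoms in `Iⁿ` are given by the tensor formula
`⟨σ₁⊗⋯⊗σₙ⟩_q^α = Σ_{i(1)+⋯+i(n)=q} ⟨σ₁⟩_{i(1)}^α ⊗ ⟨σ₂⟩_{i(2)}^{(−1)^{i(1)}α} ⊗ ⋯`. -/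
theorem atoms_in_interval_and_tensor_formula :
    (∀ α : Bool, atom (un 1) α 0 = Finsupp.single (cellOf (some α)) 1) ∧
    (∀ α : Bool, atom (un 1) α 1 = Finsupp.single (un 1) 1) ∧
    (∀ (α : Bool) (q : ℕ), 1 < q → atom (un 1) α q = 0) ∧
    (∀ α β : Bool, atom (cellOf (some β)) α 0 = Finsupp.single (cellOf (some β)) 1) ∧
    (∀ (α β : Bool) (q : ℕ), 0 < q → atom (cellOf (some β)) α q = 0) ∧
    (∀ (n : ℕ) (σ : Cell n) (α : Bool) (q : ℕ),
      atom σ α q =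
        ∑ ι ∈ Finset.Nat.antidiagonalTuple n q,
          tens fun j =>
            atom (cellOf (σ j))
              (twist α (∑ t ∈ Finset.univ.filter (fun t => t < j), ι t)) (ι j)) := by
  refine ⟨?_, ?_, ?_, ?_, ?_, ?_⟩
  · intro α; exact atom_none_zero α
  · intro α; exact atom_none_one α
  · intro α q h; exact atom_none_big α q h
  · intro α β; exact atom_some β α
  · intro α β q h; exact atom_some_big β α q h
  · intro n σ α q
    rw [atom_eq_RHSc, ← sumRHS_eq]

end CubicalNerve
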